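/- In a finite-dimensional real normed space, the set of unit vectors x admitting an inner ellipsoid (a Euclidean ball for some inner-product norm, contained in the unit ball, containing x in its boundary) is dense in the unit sphere. -/

import Mathlib

open Module Metric


/-- `x` admits an inner ellipsoid. -/
def InnerEllipsoidAt (X : Type*) [NormedAddCommGroup X] [NormedSpace ℝ X] (x : X) : Prop :=
  ∃ B : LinearMap.BilinForm ℝ X, (∀ z w : X, B z w = B w z) ∧
    (∀ z : X, ‖z‖ ^ 2 ≤ B z z) ∧ B x x = 1

set_option maxHeartbeats 1000000 in
private theorem stmt4_aux (X : Type*) [NormedAddCommGroup X] [NormedSpace ℝ X] [FiniteDimensional ℝ X] :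
    ∀ x : X, ‖x‖ = 1 → ∀ ε : ℝ, 0 < ε →
      ∃ y : X, ‖y‖ = 1 ∧ ‖y - x‖ < ε ∧
        (∃ B : LinearMap.BilinForm ℝ X, (∀ z w : X, B z w = B w z) ∧
          (∀ z : X, ‖z‖ ^ 2 ≤ B z z) ∧ B y y = 1) := by
  intro x hx ε hε
  have hx0 : x ≠ 0 := by
    intro h; rw [h, norm_zero] at hx; exact one_ne_zero hx.symm
  set F := EuclideanSpace ℝ (Fin (finrank ℝ X))
  let L : X ≃L[ℝ] F := toEuclidean
  set r : ℝ := ‖L x‖ with hr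
  have hr0 : 0 < r := by
    simp only [hr, norm_pos_iff]
    exact (norm_pos_iff (E := F)).mpr ((map_ne_zero_iff _ L.injective).mpr hx0)
  set u : F := r⁻¹ • L x with hu
  have hunorm : ‖u‖ = 1 := by
    rw [hu, norm_smul, norm_inv, Real.norm_eq_abs, abs_of_pos hr0, ← hr,
      inv_mul_cancel₀ hr0.ne']
  have huu : (inner ℝ u u : ℝ) = 1 := by
    rw [real_inner_self_eq_norm_sq, hunorm]; norm_num
  set C : ℝ := ‖(L.symm : F →L[ℝ] X)‖ with hC
  have hCle : ∀ v : F, ‖L.symm v‖ ≤ C * ‖v‖ := fun v =>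
    (L.symm : F →L[ℝ] X).le_opNorm v
  have hC0 : 0 < C := by
    have h1 : (1 : ℝ) ≤ C * r := by
      have := hCle (L x)
      rwa [L.symm_apply_apply, hx, ← hr] at this
    nlinarith
  set t : ℝ := (2 * C * r / ε) ^ 2 with ht
  have ht0 : 0 ≤ t := sq_nonneg _
  have htval : t * ε ^ 2 = 4 * C ^ 2 * r ^ 2 := by
    rw [ht, div_pow]; field_simp; ring
  clear_value t
  clear_value u
  clear_value C
  clear_value r
  set q : X → ℝ := fun z => (1 + t) * (inner ℝ (L z) (L z) : ℝ) - t * (inner ℝ (L z) u : ℝ) ^ 2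
    with hq
  -- basic bounds on q
  have hq_lb : ∀ z : X, ‖L z‖ ^ 2 ≤ q z := by
    intro z
    have hcs : (inner ℝ (L z) u : ℝ) ^ 2 ≤ ‖L z‖ ^ 2 := by
      have := abs_real_inner_le_norm (L z) u
      rw [hunorm, mul_one] at this
      nlinarith [abs_nonneg (inner ℝ (L z) u : ℝ), sq_abs (inner ℝ (L z) u : ℝ)]
    have := real_inner_self_eq_norm_sq (L z)
    simp only [hq]
    nlinarith
  have hq_cont : Continuous q := by
    have h1 : Continuous fun z : X => (inner ℝ (L z) (L z) : ℝ) :=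
      L.continuous.inner L.continuous
    have h2 : Continuous fun z : X => (inner ℝ (L z) u : ℝ) :=
      L.continuous.inner continuous_const
    simp only [hq]
    exact (continuous_const.mul h1).sub (continuous_const.mul (h2.pow 2))
  have hq_homog : ∀ (c : ℝ) (z : X), q (c • z) = c ^ 2 * q z := by
    intro c z
    simp only [hq, map_smul, real_inner_smul_left, real_inner_smul_right]
    ring
  have hq_neg : ∀ z : X, q (-z) = q z := by
    intro z
    have := hq_homog (-1) z
    simpa using this
  -- minimize on sphere
  have hxS : x ∈ sphere (0 : X) 1 := mem_sphere_zero_iff_norm.mpr hx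
  obtain ⟨y₀, hy₀S, hy₀min⟩ := (isCompact_sphere (0 : X) 1).exists_isMinOn ⟨x, hxS⟩
    hq_cont.continuousOn
  set y : X := if 0 ≤ (inner ℝ (L y₀) u : ℝ) then y₀ else -y₀ with hy
  have hyS : y ∈ sphere (0 : X) 1 := by
    rw [hy]; split
    · exact hy₀S
    · simpa using hy₀S
  have hynorm : ‖y‖ = 1 := mem_sphere_zero_iff_norm.mp hyS
  have hqy : q y = q y₀ := by
    rw [hy]; split
    · rfl
    · exact hq_neg y₀
  have hymin : ∀ z ∈ sphere (0 : X) 1, q y ≤ q z := by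
    intro z hz; rw [hqy]; exact hy₀min hz
  set a : ℝ := (inner ℝ (L y) u : ℝ) with ha
  have ha0 : 0 ≤ a := by
    rw [ha, hy]; split
    · assumption
    · rename_i h
      rw [map_neg, inner_neg_left]
      linarith [not_le.mp h]
  clear_value y
  clear_value a
  set w : F := L y - a • u with hw
  have hwu : (inner ℝ w u : ℝ) = 0 := by
    rw [hw, inner_sub_left, real_inner_smul_left, huu, mul_one, ← ha, sub_self]
  have hLy : L y = a • u + w := by rw [hw]; abel
  clear_value w
  have hcomm : (inner ℝ u w : ℝ) = 0 := by rw [real_inner_comm]; exact hwu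
  have hLy2 : (inner ℝ (L y) (L y) : ℝ) = a ^ 2 + ‖w‖ ^ 2 := by
    rw [hLy, real_inner_add_add_self, real_inner_smul_left, real_inner_smul_right, huu,
      real_inner_smul_left u w, hcomm, real_inner_self_eq_norm_sq]
    ring
  have hLyu : (inner ℝ (a • u + w) u : ℝ) = a := by
    rw [inner_add_left, real_inner_smul_left, huu, hwu]; ring
  have hqyval : q y = a ^ 2 + (1 + t) * ‖w‖ ^ 2 := by
    simp only [hq, hLy2]
    rw [hLy, hLyu]
    ring
  have hqx : q x = r ^ 2 := by
    have hLxu : (inner ℝ (L x) u : ℝ) = r := by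
      rw [hu, real_inner_smul_right, real_inner_self_eq_norm_sq, ← hr, sq]
      field_simp
    simp only [hq, hLxu, real_inner_self_eq_norm_sq, ← hr]
    ring
  have hkey : a ^ 2 + (1 + t) * ‖w‖ ^ 2 ≤ r ^ 2 := by
    rw [← hqyval, ← hqx]; exact hymin x hxS
  have haler : a ≤ r := by nlinarith [sq_nonneg (‖w‖)]
  -- decompose y
  have hydec : y = (a * r⁻¹) • x + L.symm w := by
    have h0 : L.symm (L y) = y := L.symm_apply_apply y
    rw [← h0, hLy, map_add, map_smul, hu, map_smul, L.symm_apply_apply, smul_smul]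
  have hCw : ‖L.symm w‖ ≤ C * ‖w‖ := hCle w
  have hle1 : 1 ≤ a * r⁻¹ + C * ‖w‖ := by
    have h0 : ‖y‖ ≤ ‖(a * r⁻¹) • x‖ + ‖L.symm w‖ := by
      rw [hydec]; exact norm_add_le _ _
    rw [hynorm, norm_smul, hx, mul_one, Real.norm_eq_abs,
      abs_of_nonneg (by positivity)] at h0
    linarith
  have har1 : a * r⁻¹ ≤ 1 := by
    rw [← mul_inv_cancel₀ hr0.ne']
    exact mul_le_mul_of_nonneg_right haler (by positivity)
  have hyx : ‖y - x‖ ≤ (1 - a * r⁻¹) + C * ‖w‖ := by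
    have h1 : y - x = (a * r⁻¹ - 1) • x + L.symm w := by
      rw [hydec, sub_smul, one_smul]; abel
    calc ‖y - x‖ ≤ ‖(a * r⁻¹ - 1) • x‖ + ‖L.symm w‖ := by
          rw [h1]; exact norm_add_le _ _
      _ ≤ (1 - a * r⁻¹) + C * ‖w‖ := by
          rw [norm_smul, hx, mul_one, Real.norm_eq_abs, abs_of_nonpos (by linarith)]
          linarith [hCw]
  have hw2 : (1 + t) * ‖w‖ ^ 2 ≤ r ^ 2 := by nlinarith [sq_nonneg a]
  have hdist : ‖y - x‖ < ε := by
    have h3 : 4 * C ^ 2 * ‖w‖ ^ 2 < ε ^ 2 := by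
      rcases eq_or_ne ‖w‖ 0 with h | h
      · rw [h]; nlinarith
      · have hwpos : 0 < ‖w‖ ^ 2 := by positivity
        have h5 : ε ^ 2 * ((1 + t) * ‖w‖ ^ 2) ≤ ε ^ 2 * r ^ 2 :=
          mul_le_mul_of_nonneg_left hw2 (by positivity)
        nlinarith [mul_pos hr0 hr0, mul_pos hε hε, mul_pos hwpos (mul_pos hε hε)]
    have h4 : 0 ≤ C * ‖w‖ := by positivity
    nlinarith
  -- build the bilinear form
  set m : ℝ := q y with hm
  have hm0 : 0 < m := by
    have h1 := hq_lb y
    have h2 : (0:ℝ) < ‖L y‖ := by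
      rw [norm_pos_iff]
      refine (map_ne_zero_iff _ L.injective).mpr ?_
      intro h; rw [h, norm_zero] at hynorm; exact one_ne_zero hynorm.symm
    nlinarith
  have hqz : ∀ z : X, m * ‖z‖ ^ 2 ≤ q z := by
    intro z
    rcases eq_or_ne z 0 with rfl | hz
    · simp [hq]
      exact mul_nonneg (by linarith) (by positivity)
    · have hz0 : (0:ℝ) < ‖z‖ := norm_pos_iff.mpr hz
      have hzS : (‖z‖⁻¹ • z) ∈ sphere (0 : X) 1 := by
        rw [mem_sphere_zero_iff_norm, norm_smul, norm_inv, Real.norm_eq_abs,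
          abs_of_pos hz0, inv_mul_cancel₀ hz0.ne']
      have h6 := hymin _ hzS
      rw [hq_homog] at h6
      have h2 : m * ‖z‖ ^ 2 ≤ (‖z‖⁻¹ ^ 2 * q z) * ‖z‖ ^ 2 := by
        nlinarith [sq_nonneg ‖z‖]
      calc m * ‖z‖ ^ 2 ≤ (‖z‖⁻¹ ^ 2 * q z) * ‖z‖ ^ 2 := h2
        _ = q z := by field_simp
  refine ⟨y, hynorm, hdist, ?_⟩
  refine ⟨LinearMap.mk₂ ℝ
    (fun z z' => m⁻¹ * ((1 + t) * (inner ℝ (L z) (L z') : ℝ)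
      - t * (inner ℝ (L z) u : ℝ) * (inner ℝ (L z') u : ℝ)))
    (fun z₁ z₂ z' => by
      simp only [map_add, inner_add_left, inner_add_right]; ring)
    (fun c z z' => by
      simp only [map_smul, real_inner_smul_left, real_inner_smul_right, smul_eq_mul]; ring)
    (fun z z₁ z₂ => by
      simp only [map_add, inner_add_left, inner_add_right]; ring)
    (fun c z z' => by
      simp only [map_smul, real_inner_smul_left, real_inner_smul_right, smul_eq_mul]; ring), ?_, ?_, ?_⟩
  · intro z z'
    simp only [LinearMap.mk₂_apply]
    rw [real_inner_comm (L z) (L z')]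
    ring
  · intro z
    simp only [LinearMap.mk₂_apply]
    have h2 : (1 + t) * (inner ℝ (L z) (L z) : ℝ)
        - t * (inner ℝ (L z) u : ℝ) * (inner ℝ (L z) u : ℝ) = q z := by
      simp only [hq]; ring
    rw [h2]
    calc ‖z‖ ^ 2 = m⁻¹ * (m * ‖z‖ ^ 2) := by field_simp
      _ ≤ m⁻¹ * q z := mul_le_mul_of_nonneg_left (hqz z) (by positivity)
  · simp only [LinearMap.mk₂_apply]
    have h2 : (1 + t) * (inner ℝ (L y) (L y) : ℝ)
        - t * (inner ℝ (L y) u : ℝ) * (inner ℝ (L y) u : ℝ) = q y := by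
      simp only [hq]; ring
    rw [h2, ← hm, inv_mul_cancel₀ hm0.ne']

/-- In a finite-dimensional real normed space, the unit vectors admitting inner ellipsoids
are dense in the unit sphere. -/
theorem stmt4 (X : Type*) [NormedAddCommGroup X] [NormedSpace ℝ X] [FiniteDimensional ℝ X] :
    ∀ x : X, ‖x‖ = 1 → ∀ ε : ℝ, 0 < ε →
      ∃ y : X, ‖y‖ = 1 ∧ ‖y - x‖ < ε ∧ InnerEllipsoidAt X y := by
  intro x hx ε hε
  obtain ⟨y, h1, h2, h3⟩ := stmt4_aux X x hx ε hε
  exact ⟨y, h1, h2, h3⟩
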